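/- (Ehrenfeucht–Fraïssé game for GF∃.) For any finite vocabulary τ, any τ-structures 𝔄, 𝔅 with guarded tuples ā in 𝔄 and b̄ in 𝔅 of the same length, and any natural number ℓ: 𝔄,ā ≤^ℓ_GF∃ 𝔅,b̄ if and only if 𝔄,ā ⪯^ℓ_gsim 𝔅,b̄. Moreover, if 𝔄 and 𝔅 are finite, then 𝔄,ā ≤_GF∃ 𝔅,b̄ if and only if 𝔄,ā ⪯_gsim 𝔅,b̄. -/

import Mathlib

/-- A τ-structure for a vocabulary `Rel` of predicate names of arities `ar`. -/
structure GStr (Rel : Type) (ar : Rel → ℕ) (D : Type) where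
  interp : ∀ R : Rel, Set (Fin (ar R) → D)

/-- First-order formulas over the vocabulary `(Rel, ar)` (with equality), using
natural numbers as variables; `ex`/`all` quantify simultaneously over a list of
variables. -/
inductive GFO (Rel : Type) (ar : Rel → ℕ) where
  | top : GFO Rel ar
  | bot : GFO Rel ar
  | eq : ℕ → ℕ → GFO Rel ar
  | rel : (R : Rel) → (Fin (ar R) → ℕ) → GFO Rel ar
  | not : GFO Rel ar → GFO Rel ar
  | and : GFO Rel ar → GFO Rel ar → GFO Rel ar
  | or : GFO Rel ar → GFO Rel ar → GFO Rel ar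
  | imp : GFO Rel ar → GFO Rel ar → GFO Rel ar
  | ex : List ℕ → GFO Rel ar → GFO Rel ar
  | all : List ℕ → GFO Rel ar → GFO Rel ar

variable {Rel : Type} {ar : Rel → ℕ} {D D1 D2 : Type}

/-- Satisfaction of a formula in a structure under a valuation. -/
def GFO.sem (M : GStr Rel ar D) : GFO Rel ar → (ℕ → D) → Prop
  | .top, _ => True
  | .bot, _ => False
  | .eq x y, v => v x = v y
  | .rel R t, v => (fun i => v (t i)) ∈ M.interp R
  | .not φ, v => ¬ φ.sem M v
  | .and φ ψ, v => φ.sem M v ∧ ψ.sem M v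
  | .or φ ψ, v => φ.sem M v ∨ ψ.sem M v
  | .imp φ ψ, v => φ.sem M v → ψ.sem M v
  | .ex ys φ, v => ∃ w : ℕ → D, (∀ n, n ∉ ys → w n = v n) ∧ φ.sem M w
  | .all ys φ, v => ∀ w : ℕ → D, (∀ n, n ∉ ys → w n = v n) → φ.sem M w

/-- The free variables of a formula. -/
def GFO.free : GFO Rel ar → Set ℕ
  | .top | .bot => ∅
  | .eq x y => {x, y}
  | .rel _ t => Set.range t
  | .not φ => φ.free
  | .and φ ψ | .or φ ψ | .imp φ ψ => φ.free ∪ ψ.free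
  | .ex ys φ | .all ys φ => φ.free \ {n | n ∈ ys}

/-- The quantifier (nesting) depth of a formula. -/
def GFO.qdepth : GFO Rel ar → ℕ
  | .top | .bot | .eq _ _ | .rel _ _ => 0
  | .not φ => φ.qdepth
  | .and φ ψ | .or φ ψ | .imp φ ψ => max φ.qdepth ψ.qdepth
  | .ex _ φ | .all _ φ => φ.qdepth + 1

/-- Atomic formulas. -/
inductive GFO.IsAtom : GFO Rel ar → Prop
  | eq (x y : ℕ) : IsAtom (.eq x y)
  | rel (R : Rel) (t : Fin (ar R) → ℕ) : IsAtom (.rel R t)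

/-- The positive existential guarded fragment GF∃: built from atomic formulas using
∧, ∨ and guarded existential quantification `∃ȳ(G(x̄ȳ) ∧ φ(x̄ȳ))`. -/
inductive GFO.IsGFex : GFO Rel ar → Prop
  | atom {φ : GFO Rel ar} : IsAtom φ → IsGFex φ
  | and {φ ψ : GFO Rel ar} : IsGFex φ → IsGFex ψ → IsGFex (.and φ ψ)
  | or {φ ψ : GFO Rel ar} : IsGFex φ → IsGFex ψ → IsGFex (.or φ ψ)
  | ex {G φ : GFO Rel ar} (ys : List ℕ) : IsAtom G → φ.free ⊆ G.free →
      (∀ y ∈ ys, y ∈ G.free) → IsGFex φ → IsGFex (.ex ys (.and G φ))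

/-- hornGF-formulas:
`φ ::= ⊥ | ⊤ | x=y | R(x̄) | φ∧φ' | λ→φ | ∃ȳ(G(x̄ȳ)∧φ) | ∀ȳ(G(x̄ȳ)→φ)`
with `λ` in GF∃ and `G` an atomic formula containing all variables of `x̄ȳ`. -/
inductive GFO.IsHornGF : GFO Rel ar → Prop
  | bot : IsHornGF .bot
  | top : IsHornGF .top
  | eq (x y : ℕ) : IsHornGF (.eq x y)
  | rel (R : Rel) (t : Fin (ar R) → ℕ) : IsHornGF (.rel R t)
  | and {φ ψ : GFO Rel ar} : IsHornGF φ → IsHornGF ψ → IsHornGF (.and φ ψ)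
  | imp {l φ : GFO Rel ar} : IsGFex l → IsHornGF φ → IsHornGF (.imp l φ)
  | ex {G φ : GFO Rel ar} (ys : List ℕ) : IsAtom G → φ.free ⊆ G.free →
      (∀ y ∈ ys, y ∈ G.free) → IsHornGF φ → IsHornGF (.ex ys (.and G φ))
  | all {G φ : GFO Rel ar} (ys : List ℕ) : IsAtom G → φ.free ⊆ G.free →
      (∀ y ∈ ys, y ∈ G.free) → IsHornGF φ → IsHornGF (.all ys (.imp G φ))

/-- Disjunctions of negations of atoms. -/
inductive GFO.IsNegClause : GFO Rel ar → Prop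
  | neg {φ : GFO Rel ar} : IsAtom φ → IsNegClause (.not φ)
  | or {φ ψ : GFO Rel ar} : IsNegClause φ → IsNegClause ψ → IsNegClause (.or φ ψ)

/-- Basic Horn formulas: disjunctions of formulas at most one of which is an atom and
the remaining ones negations of atoms. -/
inductive GFO.IsBasicHorn : GFO Rel ar → Prop
  | pos {φ : GFO Rel ar} : IsAtom φ → IsBasicHorn φ
  | neg {φ : GFO Rel ar} : IsNegClause φ → IsBasicHorn φ
  | orL {φ ψ : GFO Rel ar} : IsNegClause φ → IsBasicHorn ψ → IsBasicHorn (.or φ ψ)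
  | orR {φ ψ : GFO Rel ar} : IsBasicHorn φ → IsNegClause ψ → IsBasicHorn (.or φ ψ)

/-- Horn formulas: constructed from basic Horn formulas using ∧, ∃ and ∀. -/
inductive GFO.IsHornFO : GFO Rel ar → Prop
  | basic {φ : GFO Rel ar} : IsBasicHorn φ → IsHornFO φ
  | and {φ ψ : GFO Rel ar} : IsHornFO φ → IsHornFO ψ → IsHornFO (.and φ ψ)
  | ex (ys : List ℕ) {φ : GFO Rel ar} : IsHornFO φ → IsHornFO (.ex ys φ)
  | all (ys : List ℕ) {φ : GFO Rel ar} : IsHornFO φ → IsHornFO (.all ys φ)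

/-- A tuple is guarded if its set of components is a singleton or the set of components
of some tuple in the interpretation of a predicate. -/
def IsGuardedTup (M : GStr Rel ar D) {n : ℕ} (t : Fin n → D) : Prop :=
  (∃ a : D, Set.range t = {a}) ∨
  ∃ (R : Rel) (c : Fin (ar R) → D), c ∈ M.interp R ∧ Set.range t = Set.range c

/-- `ā ↦ b̄` is a well-defined map `[ā] → [b̄]` that is a homomorphism from `𝔄|_[ā]`
to `𝔅|_[b̄]`. -/
def TupHom (M : GStr Rel ar D1) (N : GStr Rel ar D2) {n : ℕ}
    (a : Fin n → D1) (b : Fin n → D2) : Prop :=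
  (∀ i j : Fin n, a i = a j → b i = b j) ∧
  ∀ (R : Rel) (σ : Fin (ar R) → Fin n), (a ∘ σ) ∈ M.interp R → (b ∘ σ) ∈ N.interp R

/-- `𝔄 ⊨ φ(ā)`: satisfaction of a formula at a tuple (interpreting variable `i` as the
`i`-th component, for `i` below the length of the tuple). -/
def satTup (M : GStr Rel ar D) (φ : GFO Rel ar) {n : ℕ} (t : Fin n → D) : Prop :=
  ∀ v : ℕ → D, (∀ i : Fin n, v i.val = t i) → φ.sem M v

/-- `Z` is a guarded simulation between `M` and `N`. -/
def IsGSim (M : GStr Rel ar D1) (N : GStr Rel ar D2)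
    (Z : Set (Σ n : ℕ, (Fin n → D1) × (Fin n → D2))) : Prop :=
  ∀ q ∈ Z,
    IsGuardedTup M q.2.1 ∧ IsGuardedTup N q.2.2 ∧ TupHom M N q.2.1 q.2.2 ∧
    ∀ (m : ℕ) (a' : Fin m → D1), IsGuardedTup M a' →
      ∃ b' : Fin m → D2,
        (⟨m, a', b'⟩ : Σ n : ℕ, (Fin n → D1) × (Fin n → D2)) ∈ Z ∧
        ∀ (i : Fin q.1) (j : Fin m), q.2.1 i = a' j → q.2.2 i = b' j

/-- `𝔄,ā ⪯_gsim 𝔅,b̄`: some guarded simulation contains `ā ↦ b̄`. -/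
def GSim (M : GStr Rel ar D1) (N : GStr Rel ar D2) {n : ℕ}
    (a : Fin n → D1) (b : Fin n → D2) : Prop :=
  ∃ Z, IsGSim M N Z ∧ (⟨n, a, b⟩ : Σ n : ℕ, (Fin n → D1) × (Fin n → D2)) ∈ Z

/-- The ℓ-round guarded simulation relations `⪯^ℓ_gsim`. -/
def GSimL (M : GStr Rel ar D1) (N : GStr Rel ar D2) :
    ℕ → (Σ n : ℕ, (Fin n → D1) × (Fin n → D2)) → Prop
  | 0 => fun q => TupHom M N q.2.1 q.2.2
  | ℓ + 1 => fun q =>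
      TupHom M N q.2.1 q.2.2 ∧
      ∀ (m : ℕ) (a' : Fin m → D1), IsGuardedTup M a' →
        ∃ b' : Fin m → D2, IsGuardedTup N b' ∧
          GSimL M N ℓ ⟨m, a', b'⟩ ∧
          ∀ (i : Fin q.1) (j : Fin m), q.2.1 i = a' j → q.2.2 i = b' j

/-- `𝔄,ā ≤^ℓ_GF∃ 𝔅,b̄`. -/
def leGFexDepth (M : GStr Rel ar D1) (N : GStr Rel ar D2) (ℓ : ℕ) {n : ℕ}
    (a : Fin n → D1) (b : Fin n → D2) : Prop :=
  ∀ φ : GFO Rel ar, φ.IsGFex → φ.qdepth ≤ ℓ → φ.free ⊆ {m : ℕ | m < n} →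
    satTup M φ a → satTup N φ b

/-- `𝔄,ā ≤_GF∃ 𝔅,b̄`. -/
def leGFex (M : GStr Rel ar D1) (N : GStr Rel ar D2) {n : ℕ}
    (a : Fin n → D1) (b : Fin n → D2) : Prop :=
  ∀ φ : GFO Rel ar, φ.IsGFex → φ.free ⊆ {m : ℕ | m < n} →
    satTup M φ a → satTup N φ b

/-! ### Auxiliary development -/

section EFAux

attribute [local instance] Classical.propDecidable

/-- Conjunction of a list of formulas (nonempty-friendly). -/
def myAnd : List (GFO Rel ar) → GFO Rel ar
  | [] => .top
  | [φ] => φ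
  | φ :: ψ :: l => .and φ (myAnd (ψ :: l))

lemma myAnd_sem (M : GStr Rel ar D) (v : ℕ → D) :
    ∀ l : List (GFO Rel ar), (myAnd l).sem M v ↔ ∀ φ ∈ l, φ.sem M v
  | [] => by simp [myAnd, GFO.sem]
  | [φ] => by simp [myAnd]
  | φ :: ψ :: l => by
      rw [show myAnd (φ :: ψ :: l) = .and φ (myAnd (ψ :: l)) from rfl]
      simp only [GFO.sem, myAnd_sem M v (ψ :: l), List.mem_cons]
      constructor
      · rintro ⟨h1, h2⟩ χ (rfl | h) <;> [exact h1; exact h2 _ h]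
      · intro h; exact ⟨h _ (Or.inl rfl), fun χ hχ => h χ (Or.inr hχ)⟩

lemma myAnd_free {S : Set ℕ} :
    ∀ l : List (GFO Rel ar), (∀ φ ∈ l, GFO.free φ ⊆ S) → (myAnd l).free ⊆ S
  | [] => by intro _; simp [myAnd, GFO.free]
  | [φ] => by intro h; simpa [myAnd] using h φ (by simp)
  | φ :: ψ :: l => by
      intro h
      rw [show myAnd (φ :: ψ :: l) = .and φ (myAnd (ψ :: l)) from rfl]
      simp only [GFO.free, Set.union_subset_iff]
      exact ⟨h φ (by simp), myAnd_free (ψ :: l) (fun χ hχ => h χ (List.mem_cons_of_mem _ hχ))⟩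

lemma myAnd_qdepth {d : ℕ} :
    ∀ l : List (GFO Rel ar), (∀ φ ∈ l, GFO.qdepth φ ≤ d) → (myAnd l).qdepth ≤ d
  | [] => by intro _; simp [myAnd, GFO.qdepth]
  | [φ] => by intro h; simpa [myAnd] using h φ (by simp)
  | φ :: ψ :: l => by
      intro h
      rw [show myAnd (φ :: ψ :: l) = .and φ (myAnd (ψ :: l)) from rfl]
      simp only [GFO.qdepth, max_le_iff]
      exact ⟨h φ (by simp), myAnd_qdepth (ψ :: l) (fun χ hχ => h χ (List.mem_cons_of_mem _ hχ))⟩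

lemma myAnd_gfex :
    ∀ l : List (GFO Rel ar), l ≠ [] → (∀ φ ∈ l, GFO.IsGFex φ) → (myAnd l).IsGFex
  | [], h, _ => absurd rfl h
  | [φ], _, h => by simpa [myAnd] using h φ (by simp)
  | φ :: ψ :: l, _, h => by
      rw [show myAnd (φ :: ψ :: l) = .and φ (myAnd (ψ :: l)) from rfl]
      exact GFO.IsGFex.and (h φ (by simp))
        (myAnd_gfex (ψ :: l) (by simp) (fun χ hχ => h χ (List.mem_cons_of_mem _ hχ)))

/-! ### Basic lemmas on `GSimL` -/

lemma gsimL_tupHom (M : GStr Rel ar D1) (N : GStr Rel ar D2) :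
    ∀ (ℓ : ℕ) q, GSimL M N ℓ q → TupHom M N q.2.1 q.2.2 := by
  intro ℓ q h
  cases ℓ with
  | zero => exact h
  | succ ℓ => exact h.1

lemma gsimL_succ (M : GStr Rel ar D1) (N : GStr Rel ar D2) :
    ∀ (ℓ : ℕ) q, GSimL M N (ℓ + 1) q → GSimL M N ℓ q := by
  intro ℓ
  induction ℓ with
  | zero => exact fun q h => h.1
  | succ ℓ ih =>
      intro q h
      refine ⟨h.1, fun m a' hg => ?_⟩
      obtain ⟨b', hb1, hb2, hb3⟩ := h.2 m a' hg
      exact ⟨b', hb1, ih _ hb2, hb3⟩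

lemma gsimL_antitone (M : GStr Rel ar D1) (N : GStr Rel ar D2) {ℓ ℓ' : ℕ}
    (h : ℓ' ≤ ℓ) : ∀ q, GSimL M N ℓ q → GSimL M N ℓ' q := by
  induction ℓ with
  | zero => intro q hq; rw [Nat.le_zero.mp h]; exact hq
  | succ ℓ ih =>
      intro q hq
      rcases Nat.lt_or_ge ℓ' (ℓ + 1) with hlt | hge
      · exact ih (Nat.lt_succ_iff.mp hlt) q (gsimL_succ M N ℓ q hq)
      · rw [Nat.le_antisymm h hge]; exact hq

lemma gsimL_reindex (M : GStr Rel ar D1) (N : GStr Rel ar D2) :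
    ∀ (ℓ : ℕ) {m1 m2 : ℕ} (u : Fin m1 → D1) (v : Fin m1 → D2) (σ : Fin m2 → Fin m1),
      GSimL M N ℓ ⟨m1, u, v⟩ → GSimL M N ℓ ⟨m2, u ∘ σ, v ∘ σ⟩ := by
  intro ℓ
  induction ℓ with
  | zero =>
      intro m1 m2 u v σ h
      exact ⟨fun i j hij => h.1 (σ i) (σ j) hij, fun R τ hin => h.2 R (σ ∘ τ) hin⟩
  | succ ℓ ih =>
      intro m1 m2 u v σ h
      refine ⟨⟨fun i j hij => h.1.1 (σ i) (σ j) hij, fun R τ hin => h.1.2 R (σ ∘ τ) hin⟩,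
        fun m a' hg => ?_⟩
      obtain ⟨b', hb1, hb2, hb3⟩ := h.2 m a' hg
      exact ⟨b', hb1, hb2, fun i j hij => hb3 (σ i) j hij⟩

/-- Answering canonical challenges suffices. -/
lemma forthCanon (M : GStr Rel ar D1) (N : GStr Rel ar D2) (ℓ : ℕ)
    {m : ℕ} (c : Fin m → D1) (d : Fin m → D2)
    (Hs : ∀ e : D1, ∃ d0 : D2,
      GSimL M N ℓ ⟨1, fun _ => e, fun _ => d0⟩ ∧ ∀ i, c i = e → d i = d0)
    (Hr : ∀ (R : Rel) (t : Fin (ar R) → D1), t ∈ M.interp R →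
      ∃ u : Fin (ar R) → D2, u ∈ N.interp R ∧ GSimL M N ℓ ⟨ar R, t, u⟩ ∧
        ∀ i k, c i = t k → d i = u k) :
    ∀ (m'' : ℕ) (a'' : Fin m'' → D1), IsGuardedTup M a'' →
      ∃ b'' : Fin m'' → D2, IsGuardedTup N b'' ∧ GSimL M N ℓ ⟨m'', a'', b''⟩ ∧
        ∀ i j, c i = a'' j → d i = b'' j := by
  intro m'' a'' hg
  rcases hg with ⟨e, hrange⟩ | ⟨R, t, htR, hrange⟩
  · obtain ⟨d0, hsim, hagr⟩ := Hs e
    have hae : ∀ j, a'' j = e := by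
      intro j
      have : a'' j ∈ Set.range a'' := ⟨j, rfl⟩
      rw [hrange] at this; exact this
    have hne : ∃ j0 : Fin m'', True := by
      have : e ∈ Set.range a'' := by rw [hrange]; exact rfl
      obtain ⟨j0, _⟩ := this; exact ⟨j0, trivial⟩
    obtain ⟨j0, -⟩ := hne
    refine ⟨fun _ => d0, ?_, ?_, ?_⟩
    · left; exact ⟨d0, by
        apply Set.eq_singleton_iff_nonempty_unique_mem.mpr
        exact ⟨⟨d0, j0, rfl⟩, fun x ⟨j, hj⟩ => hj.symm⟩⟩
    · have := gsimL_reindex M N ℓ (fun _ : Fin 1 => e) (fun _ : Fin 1 => d0)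
        (fun _ : Fin m'' => (0 : Fin 1)) hsim
      have heq : ((fun _ : Fin 1 => e) ∘ fun _ : Fin m'' => (0 : Fin 1)) = a'' := by
        funext j; exact (hae j).symm
      rw [heq] at this; exact this
    · intro i j hij
      exact hagr i (by rw [hij, hae j])
  · obtain ⟨u, huN, hsim, hagr⟩ := Hr R t htR
    have hsel : ∀ j : Fin m'', ∃ k, t k = a'' j := by
      intro j
      have : a'' j ∈ Set.range t := by rw [← hrange]; exact ⟨j, rfl⟩
      exact this
    choose k hk using hsel
    have htuph := gsimL_tupHom M N ℓ _ hsim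
    refine ⟨u ∘ k, ?_, ?_, ?_⟩
    · right
      refine ⟨R, u, huN, ?_⟩
      apply Set.Subset.antisymm
      · rintro x ⟨j, rfl⟩; exact ⟨k j, rfl⟩
      · rintro x ⟨k0, rfl⟩
        have : t k0 ∈ Set.range a'' := by rw [hrange]; exact ⟨k0, rfl⟩
        obtain ⟨j0, hj0⟩ := this
        refine ⟨j0, ?_⟩
        exact show (u ∘ k) j0 = u k0 from htuph.1 (k j0) k0 (show t (k j0) = t k0 by rw [hk j0, ← hj0])
    · have := gsimL_reindex M N ℓ t u k hsim
      have heq : t ∘ k = a'' := funext hk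
      rw [heq] at this; exact this
    · intro i j hij
      exact hagr i (k j) (by rw [hij, hk j])

/-! ### Level types and characteristic formulas -/

/-- Atom profile of a tuple. -/
abbrev Prof (Rel : Type) (ar : Rel → ℕ) (m : ℕ) : Type :=
  (Fin m → Fin m → Bool) × ((R : Rel) → (Fin (ar R) → Fin m) → Bool)

/-- Challenge codes, relative to a family of type-sets. -/
abbrev CodeF (Rel : Type) (ar : Rel → ℕ) (f : ℕ → Type) (m : ℕ) : Type :=
  ((Fin 1 → Option (Fin m)) × f 1) ⊕ (Σ R : Rel, ((Fin (ar R) → Option (Fin m)) × f (ar R)))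

/-- `ℓ`-types of `m`-tuples. -/
def Tt (Rel : Type) (ar : Rel → ℕ) : ℕ → ℕ → Type := fun ℓ =>
  Nat.rec (fun m => Prof Rel ar m)
    (fun _ ih m => Prof Rel ar m × (CodeF Rel ar ih m → Bool)) ℓ

abbrev Code (Rel : Type) (ar : Rel → ℕ) (ℓ m : ℕ) : Type := CodeF Rel ar (Tt Rel ar ℓ) m

lemma finite_Tt [Finite Rel] : ∀ ℓ m, Finite (Tt Rel ar ℓ m) := by
  intro ℓ
  induction ℓ with
  | zero => intro m; exact inferInstanceAs (Finite (Prof Rel ar m))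
  | succ ℓ ih =>
      intro m
      haveI h1 : Finite (Tt Rel ar ℓ 1) := ih 1
      haveI h2 : ∀ R : Rel, Finite (Tt Rel ar ℓ (ar R)) := fun R => ih (ar R)
      exact inferInstanceAs (Finite (Prof Rel ar m × (Code Rel ar ℓ m → Bool)))

lemma finite_Code [Finite Rel] (ℓ m : ℕ) : Finite (Code Rel ar ℓ m) := by
  haveI h1 : Finite (Tt Rel ar ℓ 1) := finite_Tt ℓ 1
  haveI h2 : ∀ R : Rel, Finite (Tt Rel ar ℓ (ar R)) := fun R => finite_Tt ℓ (ar R)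
  exact inferInstanceAs (Finite (CodeF Rel ar (Tt Rel ar ℓ) m))

/-- The atom profile of a tuple. -/
noncomputable def profOf (M : GStr Rel ar D1) {m : ℕ} (c : Fin m → D1) : Prof Rel ar m :=
  (fun i j => decide (c i = c j), fun R σ => decide ((c ∘ σ) ∈ M.interp R))

/-- The glue pattern of `c'` relative to `c`. -/
noncomputable def glueOf {m m' : ℕ} (c : Fin m → D1) (c' : Fin m' → D1) :
    Fin m' → Option (Fin m) :=
  fun j => Fin.find? (fun i => decide (c i = c' j))

lemma glue_some {m m' : ℕ} {c : Fin m → D1} {c' : Fin m' → D1} {j : Fin m'} {i : Fin m}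
    (h : glueOf c c' j = some i) : c i = c' j :=
  of_decide_eq_true (Fin.eq_true_of_find?_eq_some h)

lemma glue_isSome {m m' : ℕ} {c : Fin m → D1} {c' : Fin m' → D1} {j : Fin m'}
    (h : ∃ i, c i = c' j) : ∃ i, glueOf c c' j = some i := by
  have := Fin.isSome_find?_iff.mpr (let ⟨i, hi⟩ := h; ⟨i, decide_eq_true hi⟩)
  exact Option.isSome_iff_exists.mp this

/-- The `ℓ`-type of a tuple in `M`. -/
noncomputable def typeOf (M : GStr Rel ar D1) : (ℓ : ℕ) → {m : ℕ} → (Fin m → D1) → Tt Rel ar ℓ m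
  | 0, _, c => profOf M c
  | (ℓ+1), _, c =>
      (profOf M c, fun cd =>
        decide (match cd with
        | .inl (g, τ) => ∃ e : D1,
            glueOf c (fun _ : Fin 1 => e) = g ∧ typeOf M ℓ (fun _ : Fin 1 => e) = τ
        | .inr ⟨R, g, τ⟩ => ∃ t : Fin (ar R) → D1,
            t ∈ M.interp R ∧ glueOf c t = g ∧ typeOf M ℓ t = τ))

/-- Variables assigned to positions of a challenge. -/
def vrOf {m m' : ℕ} (vr : Fin m → ℕ) (fr : ℕ) (g : Fin m' → Option (Fin m)) :
    Fin m' → ℕ :=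
  fun j => match g j with
  | some i => vr i
  | none => fr + j.val

/-- The fresh variables of a challenge. -/
def ysOf {m m' : ℕ} (fr : ℕ) (g : Fin m' → Option (Fin m)) : List ℕ :=
  (List.finRange m').filterMap (fun j => match g j with
    | some _ => none
    | none => some (fr + j.val))

lemma mem_ysOf {m m' : ℕ} {fr : ℕ} {g : Fin m' → Option (Fin m)} {x : ℕ} :
    x ∈ ysOf fr g ↔ ∃ j : Fin m', g j = none ∧ fr + j.val = x := by
  simp only [ysOf, List.mem_filterMap, List.mem_finRange, true_and]
  constructor
  · rintro ⟨j, hj⟩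
    rcases hgj : g j with _ | i
    · rw [hgj] at hj; exact ⟨j, hgj, by simpa using hj⟩
    · rw [hgj] at hj; simp at hj
  · rintro ⟨j, hgj, hx⟩
    exact ⟨j, by rw [hgj]; simpa using hx⟩

lemma ge_of_mem_ysOf {m m' : ℕ} {fr : ℕ} {g : Fin m' → Option (Fin m)} {x : ℕ}
    (h : x ∈ ysOf fr g) : fr ≤ x := by
  obtain ⟨j, _, hx⟩ := mem_ysOf.mp h; omega

/-- The list of atoms for a profile. -/
noncomputable def atomsOf [Fintype Rel] {m : ℕ} (p : Prof Rel ar m) (vr : Fin m → ℕ) :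
    List (GFO Rel ar) :=
  ((List.finRange m).flatMap (fun i => (List.finRange m).filterMap (fun j =>
      if p.1 i j then some (.eq (vr i) (vr j)) else none))) ++
  ((Finset.univ : Finset Rel).toList.flatMap (fun R =>
      ((Finset.univ : Finset (Fin (ar R) → Fin m)).toList).filterMap (fun σ =>
        if p.2 R σ then some (.rel R (vr ∘ σ)) else none)))

lemma mem_atomsOf [Fintype Rel] {m : ℕ} {p : Prof Rel ar m} {vr : Fin m → ℕ}
    {φ : GFO Rel ar} :
    φ ∈ atomsOf p vr ↔
      (∃ i j, p.1 i j = true ∧ φ = .eq (vr i) (vr j)) ∨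
      (∃ (R : Rel) (σ : Fin (ar R) → Fin m), p.2 R σ = true ∧ φ = .rel R (vr ∘ σ)) := by
  simp only [atomsOf, List.mem_append, List.mem_flatMap, List.mem_filterMap,
    List.mem_finRange, Finset.mem_toList, Finset.mem_univ, true_and]
  constructor
  · rintro (⟨i, j, hj⟩ | ⟨R, σ, hσ⟩)
    · left; refine ⟨i, j, ?_⟩
      by_cases hp : p.1 i j <;> simp [hp] at hj ⊢; exact hj.symm
    · right; refine ⟨R, σ, ?_⟩
      by_cases hp : p.2 R σ <;> simp [hp] at hσ ⊢; exact hσ.symm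
  · rintro (⟨i, j, hp, rfl⟩ | ⟨R, σ, hp, rfl⟩)
    · left; exact ⟨i, j, by simp [hp]⟩
    · right; exact ⟨R, ⟨σ, by simp [hp]⟩⟩

/-- The list of all challenge codes. -/
noncomputable def codesList [Fintype Rel] (ℓ m : ℕ) : List (Code Rel ar ℓ m) :=
  letI : Fintype (Code Rel ar ℓ m) := @Fintype.ofFinite _ (finite_Code ℓ m)
  Finset.univ.toList

lemma mem_codesList [Fintype Rel] {ℓ m : ℕ} (cd : Code Rel ar ℓ m) :
    cd ∈ codesList ℓ m := by
  letI : Fintype (Code Rel ar ℓ m) := @Fintype.ofFinite _ (finite_Code ℓ m)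
  exact Finset.mem_toList.mpr (Finset.mem_univ _)

/-- Characteristic formulas from types. -/
noncomputable def formulaOf [Fintype Rel] :
    (ℓ : ℕ) → {m : ℕ} → Tt Rel ar ℓ m → (Fin m → ℕ) → ℕ → GFO Rel ar
  | 0, _, τ, vr, _ => myAnd (atomsOf τ vr)
  | (ℓ+1), m, τ, vr, fr =>
      myAnd (atomsOf τ.1 vr ++ ((codesList ℓ m).filter (fun cd => τ.2 cd)).map (fun cd =>
        match cd with
        | .inl (g, τ') => GFO.ex (ysOf fr g)
            (.and (.eq (vrOf vr fr g 0) (vrOf vr fr g 0)) (formulaOf ℓ τ' (vrOf vr fr g) (fr + 1)))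
        | .inr ⟨R, g, τ'⟩ => GFO.ex (ysOf fr g)
            (.and (.rel R (vrOf vr fr g)) (formulaOf ℓ τ' (vrOf vr fr g) (fr + ar R)))))

/-- The characteristic formula of a tuple. -/
noncomputable def chi [Fintype Rel] (M : GStr Rel ar D1) (ℓ : ℕ) {m : ℕ}
    (c : Fin m → D1) (vr : Fin m → ℕ) (fr : ℕ) : GFO Rel ar :=
  formulaOf ℓ (typeOf M ℓ c) vr fr


/-- The challenge formula of a code. -/
noncomputable def chFor [Fintype Rel] (ℓ : ℕ) {m : ℕ} (vr : Fin m → ℕ) (fr : ℕ) :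
    Code Rel ar ℓ m → GFO Rel ar
  | .inl (g, τ') => GFO.ex (ysOf fr g)
      (.and (.eq (vrOf vr fr g 0) (vrOf vr fr g 0)) (formulaOf ℓ τ' (vrOf vr fr g) (fr + 1)))
  | .inr ⟨R, g, τ'⟩ => GFO.ex (ysOf fr g)
      (.and (.rel R (vrOf vr fr g)) (formulaOf ℓ τ' (vrOf vr fr g) (fr + ar R)))

/-- A code is realized at `c` if some canonical guarded tuple matches it. -/
def Realizes (M : GStr Rel ar D1) (ℓ : ℕ) {m : ℕ} (c : Fin m → D1) :
    Code Rel ar ℓ m → Prop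
  | .inl (g, τ) => ∃ e : D1,
      glueOf c (fun _ : Fin 1 => e) = g ∧ typeOf M ℓ (fun _ : Fin 1 => e) = τ
  | .inr ⟨R, g, τ⟩ => ∃ t : Fin (ar R) → D1,
      t ∈ M.interp R ∧ glueOf c t = g ∧ typeOf M ℓ t = τ

lemma typeOf_succ (M : GStr Rel ar D1) (ℓ : ℕ) {m : ℕ} (c : Fin m → D1) :
    typeOf M (ℓ+1) c = (profOf M c, fun cd => decide (Realizes M ℓ c cd)) := by
  rw [typeOf]
  congr 1

lemma formulaOf_succ [Fintype Rel] (ℓ : ℕ) {m : ℕ} (τ : Tt Rel ar (ℓ+1) m)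
    (vr : Fin m → ℕ) (fr : ℕ) :
    formulaOf (ℓ+1) τ vr fr = myAnd (atomsOf τ.1 vr ++
      ((codesList ℓ m).filter (fun cd => τ.2 cd)).map (chFor ℓ vr fr)) := by
  rw [formulaOf]
  congr 2

lemma chi_zero [Fintype Rel] (M : GStr Rel ar D1) {m : ℕ} (c : Fin m → D1)
    (vr : Fin m → ℕ) (fr : ℕ) :
    chi M 0 c vr fr = myAnd (atomsOf (profOf M c) vr) := rfl

lemma chi_succ [Fintype Rel] (M : GStr Rel ar D1) (ℓ : ℕ) {m : ℕ} (c : Fin m → D1)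
    (vr : Fin m → ℕ) (fr : ℕ) :
    chi M (ℓ+1) c vr fr = myAnd (atomsOf (profOf M c) vr ++
      ((codesList ℓ m).filter (fun cd => decide (Realizes M ℓ c cd))).map (chFor ℓ vr fr)) := by
  rw [chi, formulaOf_succ, typeOf_succ]
  rfl

lemma vrOf_some {m m' : ℕ} {vr : Fin m → ℕ} {fr : ℕ} {g : Fin m' → Option (Fin m)}
    {j : Fin m'} {i : Fin m} (h : g j = some i) : vrOf vr fr g j = vr i := by
  simp [vrOf, h]

lemma vrOf_none {m m' : ℕ} {vr : Fin m → ℕ} {fr : ℕ} {g : Fin m' → Option (Fin m)}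
    {j : Fin m'} (h : g j = none) : vrOf vr fr g j = fr + j.val := by
  simp [vrOf, h]

lemma vrOf_lt {m m' : ℕ} {vr : Fin m → ℕ} {fr : ℕ} (Hlt : ∀ i, vr i < fr)
    (g : Fin m' → Option (Fin m)) : ∀ j, vrOf vr fr g j < fr + m' := by
  intro j
  rcases hgj : g j with _ | i
  · rw [vrOf_none hgj]; have := j.isLt; omega
  · rw [vrOf_some hgj]; have := Hlt i; omega

lemma vrOf_inj {m m' : ℕ} {c : Fin m → D1} {c' : Fin m' → D1} {vr : Fin m → ℕ} {fr : ℕ}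
    (Hvr : ∀ i j, vr i = vr j → c i = c j) (Hlt : ∀ i, vr i < fr) :
    ∀ i j, vrOf vr fr (glueOf c c') i = vrOf vr fr (glueOf c c') j → c' i = c' j := by
  intro i j hij
  rcases hgi : glueOf c c' i with _ | i1 <;> rcases hgj : glueOf c c' j with _ | j1
  · rw [vrOf_none hgi, vrOf_none hgj] at hij
    have : i = j := Fin.ext (by omega)
    rw [this]
  · rw [vrOf_none hgi, vrOf_some hgj] at hij
    have := Hlt j1; omega
  · rw [vrOf_some hgi, vrOf_none hgj] at hij
    have := Hlt i1; omega
  · rw [vrOf_some hgi, vrOf_some hgj] at hij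
    rw [← glue_some hgi, ← glue_some hgj]
    exact Hvr i1 j1 hij

lemma atoms_ne_guarded [Fintype Rel] {M : GStr Rel ar D1} {m : ℕ} {c : Fin m → D1}
    (hg : IsGuardedTup M c) (vr : Fin m → ℕ) : atomsOf (profOf M c) vr ≠ [] := by
  rcases hg with ⟨e, hrange⟩ | ⟨R, t, htR, hrange⟩
  · have : e ∈ Set.range c := by rw [hrange]; exact rfl
    obtain ⟨i, _⟩ := this
    exact List.ne_nil_of_mem (mem_atomsOf.mpr (Or.inl ⟨i, i, by simp [profOf], rfl⟩))
  · have hsel : ∀ k, ∃ i, c i = t k := by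
      intro k
      have : t k ∈ Set.range c := by rw [hrange]; exact ⟨k, rfl⟩
      exact this
    choose σ hσ using hsel
    refine List.ne_nil_of_mem (mem_atomsOf.mpr (Or.inr ⟨R, σ, ?_, rfl⟩))
    simp only [profOf, decide_eq_true_eq]
    have : c ∘ σ = t := funext hσ
    rw [this]; exact htR


lemma atoms_free [Fintype Rel] {m : ℕ} {p : Prof Rel ar m} {vr : Fin m → ℕ}
    {φ : GFO Rel ar} (h : φ ∈ atomsOf p vr) : φ.free ⊆ Set.range vr := by
  rcases mem_atomsOf.mp h with ⟨i, j, _, rfl⟩ | ⟨R, σ, _, rfl⟩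
  · intro x hx
    simp only [GFO.free, Set.mem_insert_iff, Set.mem_singleton_iff] at hx
    rcases hx with rfl | rfl
    · exact ⟨i, rfl⟩
    · exact ⟨j, rfl⟩
  · rintro x ⟨k, rfl⟩
    exact ⟨σ k, rfl⟩

lemma atoms_gfex [Fintype Rel] {m : ℕ} {p : Prof Rel ar m} {vr : Fin m → ℕ}
    {φ : GFO Rel ar} (h : φ ∈ atomsOf p vr) : φ.IsGFex := by
  rcases mem_atomsOf.mp h with ⟨i, j, _, rfl⟩ | ⟨R, σ, _, rfl⟩
  · exact .atom (.eq _ _)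
  · exact .atom (.rel _ _)

lemma atoms_qdepth [Fintype Rel] {m : ℕ} {p : Prof Rel ar m} {vr : Fin m → ℕ}
    {φ : GFO Rel ar} (h : φ ∈ atomsOf p vr) : φ.qdepth = 0 := by
  rcases mem_atomsOf.mp h with ⟨i, j, _, rfl⟩ | ⟨R, σ, _, rfl⟩ <;> rfl

lemma range_vrOf_one {m : ℕ} {vr : Fin m → ℕ} {fr : ℕ} (g : Fin 1 → Option (Fin m)) :
    Set.range (vrOf vr fr g) = {vrOf vr fr g 0} := by
  apply Set.eq_singleton_iff_nonempty_unique_mem.mpr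
  refine ⟨⟨_, 0, rfl⟩, ?_⟩
  rintro x ⟨j, rfl⟩
  rw [Subsingleton.elim j 0]

lemma chFor_free_aux [Fintype Rel] {m m' : ℕ} {vr : Fin m → ℕ} {fr : ℕ}
    (g : Fin m' → Option (Fin m)) (G inner : GFO Rel ar)
    (hG : G.free ⊆ Set.range (vrOf vr fr g)) (hinner : inner.free ⊆ Set.range (vrOf vr fr g)) :
    (GFO.ex (ysOf fr g) (.and G inner)).free ⊆ Set.range vr := by
  intro x hx
  simp only [GFO.free, Set.mem_diff, Set.mem_union, Set.mem_setOf_eq] at hx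
  obtain ⟨hx1, hx2⟩ := hx
  have hx3 : x ∈ Set.range (vrOf vr fr g) := by
    rcases hx1 with h | h
    · exact hG h
    · exact hinner h
  obtain ⟨j, rfl⟩ := hx3
  rcases hgj : g j with _ | i
  · exact absurd (mem_ysOf.mpr ⟨j, hgj, (vrOf_none hgj).symm⟩) hx2
  · rw [vrOf_some hgj]; exact ⟨i, rfl⟩

lemma formulaOf_free [Fintype Rel] :
    ∀ (ℓ : ℕ) {m : ℕ} (τ : Tt Rel ar ℓ m) (vr : Fin m → ℕ) (fr : ℕ),
      (formulaOf ℓ τ vr fr).free ⊆ Set.range vr := by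
  intro ℓ
  induction ℓ with
  | zero =>
      intro m τ vr fr
      exact myAnd_free _ (fun φ hφ => atoms_free hφ)
  | succ ℓ ih =>
      intro m τ vr fr
      rw [formulaOf_succ]
      apply myAnd_free
      intro φ hφ
      rcases List.mem_append.mp hφ with hφ | hφ
      · exact atoms_free hφ
      · obtain ⟨cd, _, rfl⟩ := List.mem_map.mp hφ
        rcases cd with ⟨g, τ'⟩ | ⟨R, g, τ'⟩
        · refine chFor_free_aux g _ _ ?_ (ih _ _ _)
          intro x hx
          simp only [GFO.free, Set.mem_insert_iff, Set.mem_singleton_iff] at hx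
          rcases hx with rfl | rfl <;> exact ⟨0, rfl⟩
        · exact chFor_free_aux g _ _ (fun x hx => hx) (ih _ _ _)

lemma formulaOf_qdepth [Fintype Rel] :
    ∀ (ℓ : ℕ) {m : ℕ} (τ : Tt Rel ar ℓ m) (vr : Fin m → ℕ) (fr : ℕ),
      (formulaOf ℓ τ vr fr).qdepth ≤ ℓ := by
  intro ℓ
  induction ℓ with
  | zero =>
      intro m τ vr fr
      exact myAnd_qdepth _ (fun φ hφ => le_of_eq (atoms_qdepth hφ))
  | succ ℓ ih =>
      intro m τ vr fr
      rw [formulaOf_succ]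
      apply myAnd_qdepth
      intro φ hφ
      rcases List.mem_append.mp hφ with hφ | hφ
      · rw [atoms_qdepth hφ]; omega
      · obtain ⟨cd, _, rfl⟩ := List.mem_map.mp hφ
        rcases cd with ⟨g, τ'⟩ | ⟨R, g, τ'⟩
        · show (GFO.ex _ (.and _ _)).qdepth ≤ ℓ + 1
          simp only [GFO.qdepth]
          have := ih τ' (vrOf vr fr g) (fr + 1)
          omega
        · show (GFO.ex _ (.and _ _)).qdepth ≤ ℓ + 1
          simp only [GFO.qdepth]
          have := ih τ' (vrOf vr fr g) (fr + ar R)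
          omega

lemma chi_gfex [Fintype Rel] (M : GStr Rel ar D1) :
    ∀ (ℓ : ℕ) {m : ℕ} (c : Fin m → D1) (vr : Fin m → ℕ) (fr : ℕ),
      atomsOf (profOf M c) vr ≠ [] → (chi M ℓ c vr fr).IsGFex := by
  intro ℓ
  induction ℓ with
  | zero =>
      intro m c vr fr hne
      exact myAnd_gfex _ hne (fun φ hφ => atoms_gfex hφ)
  | succ ℓ ih =>
      intro m c vr fr hne
      rw [chi_succ]
      apply myAnd_gfex
      · intro hcon
        exact hne (List.append_eq_nil_iff.mp hcon).1
      intro φ hφ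
      rcases List.mem_append.mp hφ with hφ | hφ
      · exact atoms_gfex hφ
      · obtain ⟨cd, hcd, rfl⟩ := List.mem_map.mp hφ
        have hrz : Realizes M ℓ c cd := of_decide_eq_true (List.mem_filter.mp hcd).2
        rcases cd with ⟨g, τ'⟩ | ⟨R, g, τ'⟩
        · obtain ⟨e, hglue, htype⟩ := hrz
          show GFO.IsGFex (GFO.ex (ysOf fr g)
            (.and (.eq (vrOf vr fr g 0) (vrOf vr fr g 0)) (formulaOf ℓ τ' (vrOf vr fr g) (fr + 1))))
          refine GFO.IsGFex.ex _ (.eq _ _) ?_ ?_ ?_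
          · intro x hx
            have := formulaOf_free ℓ τ' (vrOf vr fr g) (fr + 1) hx
            rw [range_vrOf_one g] at this
            simp only [GFO.free, Set.mem_insert_iff, Set.mem_singleton_iff]
            exact Or.inl this
          · intro y hy
            obtain ⟨j, hgj, hyv⟩ := mem_ysOf.mp hy
            simp only [GFO.free, Set.mem_insert_iff, Set.mem_singleton_iff]
            left
            rw [← hyv, ← vrOf_none hgj, Subsingleton.elim j 0]
          · rw [← htype]
            exact ih _ _ _ (atoms_ne_guarded (Or.inl ⟨e, Set.range_const⟩) _)
        · obtain ⟨t, htR, hglue, htype⟩ := hrz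
          show GFO.IsGFex (GFO.ex (ysOf fr g)
            (.and (.rel R (vrOf vr fr g)) (formulaOf ℓ τ' (vrOf vr fr g) (fr + ar R))))
          refine GFO.IsGFex.ex _ (.rel _ _) ?_ ?_ ?_
          · exact formulaOf_free ℓ τ' (vrOf vr fr g) (fr + ar R)
          · intro y hy
            obtain ⟨j, hgj, hyv⟩ := mem_ysOf.mp hy
            rw [← hyv, ← vrOf_none hgj]
            exact ⟨j, rfl⟩
          · rw [← htype]
            exact ih _ _ _ (atoms_ne_guarded (Or.inr ⟨R, t, htR, rfl⟩) _)

lemma atoms_semM [Fintype Rel] (M : GStr Rel ar D1) {m : ℕ} (c : Fin m → D1)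
    (vr : Fin m → ℕ) (v : ℕ → D1) (hv : ∀ i, v (vr i) = c i) :
    ∀ φ ∈ atomsOf (profOf M c) vr, φ.sem M v := by
  intro φ hφ
  rcases mem_atomsOf.mp hφ with ⟨i, j, hp, rfl⟩ | ⟨R, σ, hp, rfl⟩
  · simp only [profOf, decide_eq_true_eq] at hp
    show v (vr i) = v (vr j)
    rw [hv i, hv j]; exact hp
  · simp only [profOf, decide_eq_true_eq] at hp
    show (fun k => v ((vr ∘ σ) k)) ∈ M.interp R
    have : (fun k => v ((vr ∘ σ) k)) = c ∘ σ := funext (fun k => hv (σ k))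
    rw [this]; exact hp

/-- Witness valuation for a challenge, on the `M` side. -/
lemma chal_wit (M : GStr Rel ar D1) {m m' : ℕ} (c : Fin m → D1) (c' : Fin m' → D1)
    (vr : Fin m → ℕ) (fr : ℕ) (Hlt : ∀ i, vr i < fr) (v : ℕ → D1)
    (hv : ∀ i, v (vr i) = c i) :
    ∃ w : ℕ → D1, (∀ x, x ∉ ysOf fr (glueOf c c') → w x = v x) ∧
      (∀ j, w (vrOf vr fr (glueOf c c') j) = c' j) := by
  classical
  refine ⟨fun x => if h : ∃ j : Fin m', glueOf c c' j = none ∧ fr + j.val = x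
    then c' h.choose else v x, ?_, ?_⟩
  · intro x hx
    beta_reduce
    rw [dif_neg]
    intro h
    obtain ⟨j, hj1, hj2⟩ := h
    exact hx (mem_ysOf.mpr ⟨j, hj1, hj2⟩)
  · intro j
    rcases hgj : glueOf c c' j with _ | i
    · rw [vrOf_none hgj]
      beta_reduce
      rw [dif_pos ⟨j, hgj, rfl⟩]
      have hch := (⟨j, hgj, rfl⟩ : ∃ j' : Fin m', glueOf c c' j' = none ∧
        fr + j'.val = fr + j.val).choose_spec
      have : (⟨j, hgj, rfl⟩ : ∃ j' : Fin m', glueOf c c' j' = none ∧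
          fr + j'.val = fr + j.val).choose = j := Fin.ext (by omega)
      rw [this]
    · rw [vrOf_some hgj]
      beta_reduce
      rw [dif_neg, hv i, glue_some hgj]
      rintro ⟨j', _, hj2⟩
      have := Hlt i
      omega

lemma chi_semM [Fintype Rel] (M : GStr Rel ar D1) :
    ∀ (ℓ : ℕ) {m : ℕ} (c : Fin m → D1) (vr : Fin m → ℕ) (fr : ℕ),
      (∀ i, vr i < fr) → ∀ v : ℕ → D1, (∀ i, v (vr i) = c i) →
      (chi M ℓ c vr fr).sem M v := by
  intro ℓ
  induction ℓ with
  | zero =>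
      intro m c vr fr Hlt v hv
      rw [chi_zero, myAnd_sem]
      exact atoms_semM M c vr v hv
  | succ ℓ ih =>
      intro m c vr fr Hlt v hv
      rw [chi_succ, myAnd_sem]
      intro φ hφ
      rcases List.mem_append.mp hφ with hφ | hφ
      · exact atoms_semM M c vr v hv φ hφ
      · obtain ⟨cd, hcd, rfl⟩ := List.mem_map.mp hφ
        have hrz : Realizes M ℓ c cd := of_decide_eq_true (List.mem_filter.mp hcd).2
        rcases cd with ⟨g, τ'⟩ | ⟨R, g, τ'⟩
        · obtain ⟨e, hglue, htype⟩ := hrz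
          subst hglue; subst htype
          obtain ⟨w, hw1, hw2⟩ := chal_wit M c (fun _ : Fin 1 => e) vr fr Hlt v hv
          show GFO.sem M (GFO.ex _ (.and _ _)) v
          refine ⟨w, hw1, ?_, ?_⟩
          · rfl
          · exact ih (fun _ : Fin 1 => e) _ _ (vrOf_lt Hlt _) w hw2
        · obtain ⟨t, htR, hglue, htype⟩ := hrz
          subst hglue; subst htype
          obtain ⟨w, hw1, hw2⟩ := chal_wit M c t vr fr Hlt v hv
          show GFO.sem M (GFO.ex _ (.and _ _)) v
          refine ⟨w, hw1, ?_, ?_⟩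
          · show (fun k => w (vrOf vr fr (glueOf c t) k)) ∈ M.interp R
            have : (fun k => w (vrOf vr fr (glueOf c t) k)) = t := funext hw2
            rw [this]; exact htR
          · exact ih t _ _ (vrOf_lt Hlt _) w hw2

lemma tupHom_of_atoms [Fintype Rel] (M : GStr Rel ar D1) (N : GStr Rel ar D2) {m : ℕ}
    (c : Fin m → D1) (vr : Fin m → ℕ) (w : ℕ → D2)
    (h : ∀ φ ∈ atomsOf (profOf M c) vr, φ.sem N w) : TupHom M N c (w ∘ vr) := by
  constructor
  · intro i j hij
    exact h (.eq (vr i) (vr j)) (mem_atomsOf.mpr (Or.inl ⟨i, j, decide_eq_true hij, rfl⟩))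
  · intro R σ hin
    exact h (.rel R (vr ∘ σ)) (mem_atomsOf.mpr (Or.inr ⟨R, σ, decide_eq_true hin, rfl⟩))

lemma chi_semN [Fintype Rel] (M : GStr Rel ar D1) (N : GStr Rel ar D2) :
    ∀ (ℓ : ℕ) {m : ℕ} (c : Fin m → D1) (vr : Fin m → ℕ) (fr : ℕ),
      (∀ i j, vr i = vr j → c i = c j) → (∀ i, vr i < fr) →
      ∀ w : ℕ → D2, (chi M ℓ c vr fr).sem N w → GSimL M N ℓ ⟨m, c, w ∘ vr⟩ := by
  intro ℓ
  induction ℓ with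
  | zero =>
      intro m c vr fr Hvr Hlt w hsem
      rw [chi_zero, myAnd_sem] at hsem
      exact tupHom_of_atoms M N c vr w hsem
  | succ ℓ ih =>
      intro m c vr fr Hvr Hlt w hsem
      rw [chi_succ, myAnd_sem] at hsem
      have hatoms : ∀ φ ∈ atomsOf (profOf M c) vr, φ.sem N w :=
        fun φ hφ => hsem φ (List.mem_append.mpr (Or.inl hφ))
      have hTup : TupHom M N c (w ∘ vr) := tupHom_of_atoms M N c vr w hatoms
      refine ⟨hTup, ?_⟩
      apply forthCanon M N ℓ c (w ∘ vr)
      · -- singleton challenges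
        intro e
        have hcd : (Sum.inl (glueOf c (fun _ : Fin 1 => e), typeOf M ℓ (fun _ : Fin 1 => e)) :
            Code Rel ar ℓ m) ∈
            (codesList ℓ m).filter (fun cd => decide (Realizes M ℓ c cd)) :=
          List.mem_filter.mpr ⟨mem_codesList _, decide_eq_true ⟨e, rfl, rfl⟩⟩
        obtain ⟨w', hw'1, -, hInner⟩ := hsem _
          (List.mem_append.mpr (Or.inr (List.mem_map.mpr ⟨_, hcd, rfl⟩)))
        refine ⟨w' (vrOf vr fr (glueOf c (fun _ : Fin 1 => e)) 0), ?_, ?_⟩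
        · have hg := ih (fun _ : Fin 1 => e) (vrOf vr fr (glueOf c (fun _ : Fin 1 => e)))
            (fr + 1) (vrOf_inj Hvr Hlt) (vrOf_lt Hlt _) w' hInner
          have heq : (w' ∘ vrOf vr fr (glueOf c (fun _ : Fin 1 => e))) =
              fun _ : Fin 1 => w' (vrOf vr fr (glueOf c (fun _ : Fin 1 => e)) 0) :=
            funext (fun j => by rw [Subsingleton.elim j 0]; rfl)
          rwa [heq] at hg
        · intro i hie
          obtain ⟨i', hi'⟩ := glue_isSome (c' := fun _ : Fin 1 => e) (j := 0) ⟨i, hie⟩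
          have hni : vr i' ∉ ysOf fr (glueOf c (fun _ : Fin 1 => e)) := fun hmem => by
            have := ge_of_mem_ysOf hmem; have := Hlt i'; omega
          rw [vrOf_some hi', hw'1 _ hni]
          exact hTup.1 i i' (by rw [hie]; exact (glue_some hi').symm)
      · -- relational challenges
        intro R t htR
        have hcd : (Sum.inr ⟨R, (glueOf c t, typeOf M ℓ t)⟩ : Code Rel ar ℓ m) ∈
            (codesList ℓ m).filter (fun cd => decide (Realizes M ℓ c cd)) :=
          List.mem_filter.mpr ⟨mem_codesList _, decide_eq_true ⟨t, htR, rfl, rfl⟩⟩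
        obtain ⟨w', hw'1, hG, hInner⟩ := hsem _
          (List.mem_append.mpr (Or.inr (List.mem_map.mpr ⟨_, hcd, rfl⟩)))
        refine ⟨w' ∘ vrOf vr fr (glueOf c t), hG, ?_, ?_⟩
        · exact ih t (vrOf vr fr (glueOf c t)) (fr + ar R)
            (vrOf_inj Hvr Hlt) (vrOf_lt Hlt _) w' hInner
        · intro i k hik
          obtain ⟨i', hi'⟩ := glue_isSome (c' := t) (j := k) ⟨i, hik⟩
          have hni : vr i' ∉ ysOf fr (glueOf c t) := fun hmem => by
            have := ge_of_mem_ysOf hmem; have := Hlt i'; omega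
          show (w ∘ vr) i = w' (vrOf vr fr (glueOf c t) k)
          rw [vrOf_some hi', hw'1 _ hni]
          exact hTup.1 i i' (by rw [hik]; exact (glue_some hi').symm)


/-- Core step for the `ex` case of the forward lemma. -/
lemma ex_step (M : GStr Rel ar D1) (N : GStr Rel ar D2) {m : ℕ}
    (c : Fin m → D1) (d : Fin m → D2) (ℓ' : ℕ)
    (hsim : GSimL M N (ℓ' + 1) ⟨m, c, d⟩)
    {m' : ℕ} (tG : Fin m' → ℕ) (ys : List ℕ) (G φ : GFO Rel ar)
    (hGfree : G.free = Set.range tG)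
    (hsub : φ.free ⊆ G.free)
    (w vM : ℕ → D1) (vN : ℕ → D2)
    (hwoff : ∀ x, x ∉ ys → w x = vM x)
    (hcomp : ∀ x ∈ (GFO.ex ys (.and G φ)).free, ∃ i, vM x = c i ∧ vN x = d i)
    (hguard : IsGuardedTup M (fun k => w (tG k)))
    (hGsemN : ∀ b' : Fin m' → D2, TupHom M N (fun k => w (tG k)) b' →
        ∀ wN : ℕ → D2, (∀ j, wN (tG j) = b' j) → G.sem N wN)
    (hφIH : ∀ {mm : ℕ} (c' : Fin mm → D1) (d' : Fin mm → D2),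
        GSimL M N ℓ' ⟨mm, c', d'⟩ → ∀ (vM' : ℕ → D1) (vN' : ℕ → D2),
        (∀ x ∈ φ.free, ∃ i, vM' x = c' i ∧ vN' x = d' i) →
        φ.sem M vM' → φ.sem N vN')
    (hφsemM : φ.sem M w) :
    (GFO.ex ys (.and G φ)).sem N vN := by
  classical
  obtain ⟨b', hb'g, hb'sim, hb'agr⟩ := hsim.2 m' (fun k => w (tG k)) hguard
  have hbth := gsimL_tupHom M N ℓ' _ hb'sim
  set wN : ℕ → D2 := fun x => if h : ∃ j, tG j = x then b' h.choose else vN x with hwN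
  have claim1 : ∀ j, wN (tG j) = b' j := by
    intro j
    have hex : ∃ j', tG j' = tG j := ⟨j, rfl⟩
    rw [hwN]
    beta_reduce
    rw [dif_pos hex]
    exact hbth.1 hex.choose j (congrArg w hex.choose_spec)
  have claim2 : ∀ x, x ∉ ys → wN x = vN x := by
    intro x hx
    by_cases hex : ∃ j, tG j = x
    · have hxG : x ∈ G.free := by rw [hGfree]; exact hex
      have hxfree : x ∈ (GFO.ex ys (.and G φ)).free := ⟨Or.inl hxG, hx⟩
      obtain ⟨i, hvM, hvN⟩ := hcomp x hxfree
      have hc : c i = (fun k => w (tG k)) hex.choose := by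
        show c i = w (tG hex.choose)
        rw [hex.choose_spec, hwoff x hx, hvM]
      rw [hwN]
      beta_reduce
      rw [dif_pos hex, ← hb'agr i hex.choose hc, hvN]
    · rw [hwN]
      beta_reduce
      rw [dif_neg hex]
  refine ⟨wN, claim2, ?_, ?_⟩
  · exact hGsemN b' hbth wN claim1
  · refine hφIH (fun k => w (tG k)) b' hb'sim w wN ?_ hφsemM
    intro x hxφ
    have hex : ∃ j, tG j = x := by rw [← Set.mem_range, ← hGfree]; exact hsub hxφ
    refine ⟨hex.choose, ?_, ?_⟩
    · show w x = w (tG hex.choose)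
      rw [hex.choose_spec]
    · rw [hwN]
      beta_reduce
      rw [dif_pos hex]

/-- Simulation implies preservation of GF∃ formulas. -/
lemma gfex_forward (M : GStr Rel ar D1) (N : GStr Rel ar D2) :
    ∀ (φ : GFO Rel ar), φ.IsGFex → ∀ (ℓ : ℕ), φ.qdepth ≤ ℓ →
      ∀ {m : ℕ} (c : Fin m → D1) (d : Fin m → D2), GSimL M N ℓ ⟨m, c, d⟩ →
      ∀ (vM : ℕ → D1) (vN : ℕ → D2),
        (∀ x ∈ φ.free, ∃ i, vM x = c i ∧ vN x = d i) →
        φ.sem M vM → φ.sem N vN := by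
  intro φ hφ
  induction hφ with
  | @atom φ h =>
      cases h with
      | eq x y =>
          intro ℓ _ m c d hsim vM vN hcomp hsem
          obtain ⟨i, hxc, hxd⟩ := hcomp x (by simp [GFO.free])
          obtain ⟨j, hyc, hyd⟩ := hcomp y (by simp [GFO.free])
          show vN x = vN y
          rw [hxd, hyd]
          have := (gsimL_tupHom M N ℓ _ hsim).1 i j
            (show c i = c j by rw [← hxc, ← hyc]; exact hsem)
          exact this
      | rel R t =>
          intro ℓ _ m c d hsim vM vN hcomp hsem
          choose σ hσ1 hσ2 using fun k => hcomp (t k) ⟨k, rfl⟩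
          show (fun k => vN (t k)) ∈ N.interp R
          have h2 : (fun k => vN (t k)) = d ∘ σ := funext (fun k => hσ2 k)
          have h1 : c ∘ σ = fun k => vM (t k) := funext (fun k => (hσ1 k).symm)
          rw [h2]
          apply (gsimL_tupHom M N ℓ _ hsim).2
          rw [h1]
          exact hsem
  | @and φ1 φ2 h1 h2 ih1 ih2 =>
      intro ℓ hq m c d hsim vM vN hcomp hsem
      have hq' : max φ1.qdepth φ2.qdepth ≤ ℓ := hq
      exact ⟨ih1 ℓ (le_trans (le_max_left _ _) hq') c d hsim vM vN
          (fun x hx => hcomp x (Or.inl hx)) hsem.1,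
        ih2 ℓ (le_trans (le_max_right _ _) hq') c d hsim vM vN
          (fun x hx => hcomp x (Or.inr hx)) hsem.2⟩
  | @or φ1 φ2 h1 h2 ih1 ih2 =>
      intro ℓ hq m c d hsim vM vN hcomp hsem
      have hq' : max φ1.qdepth φ2.qdepth ≤ ℓ := hq
      rcases hsem with hsem | hsem
      · exact Or.inl (ih1 ℓ (le_trans (le_max_left _ _) hq') c d hsim vM vN
          (fun x hx => hcomp x (Or.inl hx)) hsem)
      · exact Or.inr (ih2 ℓ (le_trans (le_max_right _ _) hq') c d hsim vM vN
          (fun x hx => hcomp x (Or.inr hx)) hsem)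
  | @ex G φ0 ys hG hsub hys hφ0 ih =>
      intro ℓ hq m c d hsim vM vN hcomp hsem
      obtain ⟨w, hwoff, hGsem, hφsem⟩ := hsem
      have hq' : GFO.qdepth φ0 + 1 ≤ ℓ := by
        cases hG <;> · simp only [GFO.qdepth] at hq; omega
      have hsim' := gsimL_antitone M N hq' _ hsim
      have ihq := fun {mm : ℕ} (c' : Fin mm → D1) (d' : Fin mm → D2)
          (hs : GSimL M N φ0.qdepth ⟨mm, c', d'⟩) =>
        ih φ0.qdepth le_rfl c' d' hs
      cases hG with
      | eq x y =>
          have hGsem' : w x = w y := hGsem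
          refine ex_step M N c d φ0.qdepth hsim'
            (fun k : Fin 2 => if k = 0 then x else y) ys _ φ0 ?_ hsub w vM vN hwoff hcomp
            ?_ ?_ (fun c' d' hs => ihq c' d' hs) hφsem
          · apply Set.Subset.antisymm
            · intro z hz
              rcases hz with rfl | rfl
              · exact ⟨0, by simp⟩
              · exact ⟨1, by simp⟩
            · rintro z ⟨j, rfl⟩
              by_cases hj : j = 0
              · simp [hj, GFO.free]
              · simp only [hj, if_false]
                right; rfl
          · left
            refine ⟨w x, Set.eq_singleton_iff_nonempty_unique_mem.mpr ⟨⟨_, 0, rfl⟩, ?_⟩⟩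
            rintro z ⟨j, rfl⟩
            by_cases hj : j = 0
            · simp [hj]
            · simp only [hj, if_false]
              exact hGsem'.symm
          · intro b' hbth wN hwN
            show wN x = wN y
            have h0 : wN x = b' 0 := by
              have := hwN 0; simpa using this
            have h1 : wN y = b' 1 := by
              have := hwN 1
              simpa [show (1 : Fin 2) ≠ 0 by decide] using this
            rw [h0, h1]
            apply hbth.1
            show w (if (0 : Fin 2) = 0 then x else y) = w (if (1 : Fin 2) = 0 then x else y)
            simpa [show (1 : Fin 2) ≠ 0 by decide] using hGsem'
      | rel R t =>
          have hGsem' : (fun k => w (t k)) ∈ M.interp R := hGsem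
          refine ex_step M N c d φ0.qdepth hsim' t ys (GFO.rel R t) φ0
            (rfl : (GFO.rel R t).free = Set.range t) hsub w vM vN hwoff hcomp
            (Or.inr ⟨R, _, hGsem', rfl⟩) ?_ (fun c' d' hs => ihq c' d' hs) hφsem
          intro b' hbth wN hwN
          show (fun k => wN (t k)) ∈ N.interp R
          have : (fun k => wN (t k)) = b' := funext hwN
          rw [this]
          have hid : ((fun k => w (t k)) ∘ id) ∈ M.interp R := hGsem'
          have := hbth.2 R id hid
          exact this


lemma gsim_to_gsimL (M : GStr Rel ar D1) (N : GStr Rel ar D2) {Z}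
    (hZ : IsGSim M N Z) : ∀ (ℓ : ℕ) q, q ∈ Z → GSimL M N ℓ q := by
  intro ℓ
  induction ℓ with
  | zero => intro q hq; exact (hZ q hq).2.2.1
  | succ ℓ ih =>
      intro q hq
      refine ⟨(hZ q hq).2.2.1, ?_⟩
      intro m a' hg
      obtain ⟨b', hbZ, hagr⟩ := (hZ q hq).2.2.2 m a' hg
      exact ⟨b', (hZ _ hbZ).2.1, ih _ hbZ, hagr⟩

lemma gsimL_to_gsim [Finite D2] (M : GStr Rel ar D1) (N : GStr Rel ar D2) {n : ℕ}
    (a : Fin n → D1) (b : Fin n → D2)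
    (ha : IsGuardedTup M a) (hb : IsGuardedTup N b)
    (h : ∀ ℓ, GSimL M N ℓ ⟨n, a, b⟩) : GSim M N a b := by
  refine ⟨{q | IsGuardedTup M q.2.1 ∧ IsGuardedTup N q.2.2 ∧ ∀ ℓ, GSimL M N ℓ q},
    ?_, ⟨ha, hb, h⟩⟩
  rintro q ⟨hq1, hq2, hq3⟩
  refine ⟨hq1, hq2, gsimL_tupHom M N 0 q (hq3 0), ?_⟩
  intro m a' hga'
  have hch : ∀ ℓ : ℕ, ∃ b' : Fin m → D2, IsGuardedTup N b' ∧ GSimL M N ℓ ⟨m, a', b'⟩ ∧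
      ∀ i j, q.2.1 i = a' j → q.2.2 i = b' j := fun ℓ => (hq3 (ℓ+1)).2 m a' hga'
  choose F hF1 hF2 hF3 using hch
  obtain ⟨b', hb'0⟩ := Finite.exists_infinite_fiber F
  have hb' : (F ⁻¹' {b'}).Infinite := Set.infinite_coe_iff.mp hb'0
  obtain ⟨ℓ0, hmem0⟩ := hb'.nonempty
  have hFb : F ℓ0 = b' := hmem0
  have hall : ∀ ℓ, GSimL M N ℓ ⟨m, a', b'⟩ := by
    intro ℓ
    obtain ⟨ℓ', hℓ'mem, hgt⟩ := hb'.exists_gt ℓ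
    have hFℓ' : F ℓ' = b' := hℓ'mem
    have := hF2 ℓ'
    rw [hFℓ'] at this
    exact gsimL_antitone M N (le_of_lt hgt) _ this
  refine ⟨b', ⟨hga', ?_, hall⟩, ?_⟩
  · rw [← hFb]; exact hF1 ℓ0
  · intro i j hij
    rw [← hFb]
    exact hF3 ℓ0 i j hij

end EFAux



/-- **Ehrenfeucht–Fraïssé game for GF∃.**
For any finite vocabulary τ, τ-structures `𝔄`, `𝔅` with guarded tuples `ā`, `b̄` of the
same length, and any `ℓ < ω`: `𝔄,ā ≤^ℓ_GF∃ 𝔅,b̄` iff `𝔄,ā ⪯^ℓ_gsim 𝔅,b̄`.  If `𝔄` and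
`𝔅` are finite, then `𝔄,ā ≤_GF∃ 𝔅,b̄` iff `𝔄,ā ⪯_gsim 𝔅,b̄`. -/
theorem gfex_ef_game {Rel : Type} {ar : Rel → ℕ} [Fintype Rel]
    {D1 D2 : Type} [Nonempty D1] [Nonempty D2]
    (M : GStr Rel ar D1) (N : GStr Rel ar D2) {n : ℕ}
    (a : Fin n → D1) (b : Fin n → D2)
    (ha : IsGuardedTup M a) (hb : IsGuardedTup N b) :
    (∀ ℓ : ℕ, leGFexDepth M N ℓ a b ↔ GSimL M N ℓ ⟨n, a, b⟩) ∧
    (Finite D1 → Finite D2 → (leGFex M N a b ↔ GSim M N a b)) := by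
  classical
  have hiff : ∀ ℓ : ℕ, leGFexDepth M N ℓ a b ↔ GSimL M N ℓ ⟨n, a, b⟩ := by
    intro ℓ
    constructor
    · intro hle
      have hvrlt : ∀ i : Fin n, (fun i : Fin n => i.val) i < n := fun i => i.isLt
      have hM : satTup M (chi M ℓ a (fun i : Fin n => i.val) n) a := by
        intro v hv
        exact chi_semM M ℓ a _ n hvrlt v (fun i => hv i)
      have hfree : (chi M ℓ a (fun i : Fin n => i.val) n).free ⊆ {m : ℕ | m < n} := by
        intro x hx
        obtain ⟨i, rfl⟩ := formulaOf_free ℓ (typeOf M ℓ a) (fun i : Fin n => i.val) n hx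
        exact i.isLt
      have hN := hle _ (chi_gfex M ℓ a _ n (atoms_ne_guarded ha _))
        (formulaOf_qdepth ℓ (typeOf M ℓ a) _ n) hfree hM
      have hsem := hN (fun x => if h : x < n then b ⟨x, h⟩ else Classical.arbitrary D2)
        (fun i => by simp)
      have hres := chi_semN M N ℓ a (fun i : Fin n => i.val) n
        (fun i j hij => by rw [show i = j from Fin.ext hij]) hvrlt _ hsem
      have heq : ((fun x => if h : x < n then b ⟨x, h⟩ else Classical.arbitrary D2) ∘
          (fun i : Fin n => i.val)) = b := funext (fun i => by simp)
      rwa [heq] at hres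
    · intro hsim φ hgf hqd hfree hsat vN hvN
      refine gfex_forward M N φ hgf ℓ hqd a b hsim
        (fun x => if h : x < n then a ⟨x, h⟩ else Classical.arbitrary D1) vN ?_
        (hsat _ (fun i => by simp))
      intro x hx
      have hxn : x < n := hfree hx
      exact ⟨⟨x, hxn⟩, dif_pos hxn, hvN ⟨x, hxn⟩⟩
  refine ⟨hiff, fun _ _ => ⟨?_, ?_⟩⟩
  · intro hle
    refine gsimL_to_gsim M N a b ha hb (fun ℓ => (hiff ℓ).mp ?_)
    intro φ h1 _ h3
    exact hle φ h1 h3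
  · rintro ⟨Z, hZ, hmem⟩ φ hgf hfree
    exact (hiff φ.qdepth).mpr (gsim_to_gsimL M N hZ φ.qdepth _ hmem) φ hgf le_rfl hfree
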